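/- Let P be any distribution over the Euclidean unit ball B₂^d(1) with mean μ_P, and let Z ~ N(μ_Z, σ_Z² I_d) with σ_Z ∈ (0,1] and ‖μ_Z‖₂ ≤ 2. Then with probability at least 1 − 2exp(−0.1/σ_Z²) over Z, we have |⟨Z, E_{U∼P}[clip_{Z,3}(U)] − μ_P⟩| ≤ 2exp(−0.1/σ_Z²). -/

import Mathlib

open MeasureTheory Real RealInnerProductSpace
open Set Filter

noncomputable def gaussianPi {d : ℕ} (μZ : EuclideanSpace ℝ (Fin d)) (σ : ℝ) :
    Measure (EuclideanSpace ℝ (Fin d)) :=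
  volume.withDensity (fun x =>
    ENNReal.ofReal ((2 * π * σ ^ 2) ^ (-(d : ℝ) / 2) * Real.exp (-‖x - μZ‖ ^ 2 / (2 * σ ^ 2))))

noncomputable def clip {d : ℕ} (φ : EuclideanSpace ℝ (Fin d)) (c : ℝ)
    (u : EuclideanSpace ℝ (Fin d)) : EuclideanSpace ℝ (Fin d) :=
  if ⟪φ, u⟫ ≠ 0 then (min 1 (c / |⟪φ, u⟫|)) • u else u


lemma integral_Ioi_rmul {b : ℝ} (hb : 0 < b) :
    ∫ r in Ioi (0:ℝ), r * exp (-b * r^2) = (2*b)⁻¹ := by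
  have hb' : (2*b) ≠ 0 := by positivity
  have A : ∀ x : ℝ, HasDerivAt (fun x => -(2*b)⁻¹ * exp (-b * x^2))
      (x * exp (-b * x^2)) x := by
    intro x
    refine (((hasDerivAt_pow 2 x).const_mul (-b)).exp.const_mul (-(2*b)⁻¹)).congr_deriv ?_
    field_simp
    ring
  have B : Tendsto (fun y : ℝ => -(2*b)⁻¹ * exp (-b * y^2)) atTop (nhds (-(2*b)⁻¹ * 0)) := by
    refine Tendsto.const_mul _ ?_
    exact tendsto_exp_atBot.comp
      ((tendsto_pow_atTop two_ne_zero).const_mul_atTop_of_neg (neg_lt_zero.2 hb))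
  have := integral_Ioi_of_hasDerivAt_of_tendsto' (a := 0) (f := fun x => -(2*b)⁻¹ * exp (-b * x^2))
    (fun x _ => A x) (integrable_mul_exp_neg_mul_sq hb).integrableOn B
  rw [this]
  simp

lemma integral_abs_mul {b : ℝ} (hb : 0 < b) :
    ∫ t : ℝ, |t| * exp (-b * t^2) = b⁻¹ := by
  have : ∀ t : ℝ, |t| * exp (-b * t^2) = (fun r => r * exp (-b * r^2)) |t| := by
    intro t; simp [sq_abs]
  rw [show (fun t : ℝ => |t| * exp (-b * t^2)) = fun t => (fun r => r * exp (-b * r^2)) |t| from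
    funext this]
  rw [integral_comp_abs (f := fun r => r * exp (-b * r^2)), integral_Ioi_rmul hb]
  field_simp



lemma exp_form {σ : ℝ} (hσ : 0 < σ) : ∀ t : ℝ, -t^2/(2*σ^2) = -((2*σ^2)⁻¹) * t^2 := by
  intro t; field_simp

lemma gauss_norm1 {σ : ℝ} (hσ : 0 < σ) :
    ∫ t : ℝ, (2*π*σ^2) ^ (-(1:ℝ)/2) * exp (-t^2/(2*σ^2)) = 1 := by
  have h2 : (0:ℝ) < 2*π*σ^2 := by positivity
  simp only [exp_form hσ]
  rw [integral_const_mul, integral_gaussian]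
  have : π / (2*σ^2)⁻¹ = 2*π*σ^2 := by field_simp
  rw [this, Real.sqrt_eq_rpow, ← Real.rpow_add h2]
  norm_num

lemma gauss_integrable {σ : ℝ} (hσ : 0 < σ) (c : ℝ) :
    Integrable (fun t : ℝ => c * exp (-t^2/(2*σ^2))) := by
  simp only [exp_form hσ]
  exact (integrable_exp_neg_mul_sq (by positivity)).const_mul c

lemma abs_gauss_integrable {b : ℝ} (hb : 0 < b) (c : ℝ) :
    Integrable (fun t : ℝ => c * (|t| * exp (-b * t^2))) := by
  have h := (integrable_mul_exp_neg_mul_sq hb).abs.const_mul c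
  apply h.congr
  refine Filter.Eventually.of_forall (fun t => ?_)
  simp only []
  rw [abs_mul, abs_of_pos (exp_pos _)]

lemma oneD_bound {σ : ℝ} (hσ0 : 0 < σ) (hσ1 : σ ≤ 1) :
    ∫ t : ℝ, max (|t|-1) 0 * ((2*π*σ^2) ^ (-(1:ℝ)/2) * exp (-t^2/(2*σ^2)))
      ≤ 4 * exp (-0.2/σ^2) := by
  set c : ℝ := (2*π*σ^2) ^ (-(1:ℝ)/2) with hc
  have hcpos : 0 < c := by rw [hc]; positivity
  set b' : ℝ := (4*σ^2)⁻¹ with hb'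
  have hb'pos : 0 < b' := by rw [hb']; positivity
  -- pointwise bound
  have hpt : ∀ t : ℝ, max (|t|-1) 0 * (c * exp (-t^2/(2*σ^2)))
      ≤ c * exp (-b') * (|t| * exp (-b' * t^2)) := by
    intro t
    rcases le_or_gt (|t|) 1 with h | h
    · rw [max_eq_right (by linarith : |t| - 1 ≤ 0)]
      have : (0:ℝ) ≤ c * exp (-b') * (|t| * exp (-b' * t^2)) := by positivity
      linarith
    · rw [max_eq_left (by linarith : (0:ℝ) ≤ |t| - 1)]
      have ht2 : (1:ℝ) ≤ t^2 := by
        have := sq_abs t; nlinarith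
      have hexp : exp (-t^2/(2*σ^2)) ≤ exp (-b') * exp (-b' * t^2) := by
        rw [← Real.exp_add]
        apply Real.exp_le_exp.mpr
        have : -t^2/(2*σ^2) = -b' * t^2 + -b' * t^2 := by
          rw [hb']; field_simp; ring
        rw [this]
        have : -b' * t^2 ≤ -b' := by nlinarith
        linarith
      calc (|t|-1) * (c * exp (-t^2/(2*σ^2)))
          ≤ |t| * (c * (exp (-b') * exp (-b' * t^2))) := by
            apply mul_le_mul (by linarith) _ (by positivity) (abs_nonneg t)
            exact mul_le_mul_of_nonneg_left hexp hcpos.le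
        _ = c * exp (-b') * (|t| * exp (-b' * t^2)) := by ring
  -- integrate
  have hint2 : Integrable (fun t : ℝ => c * exp (-b') * (|t| * exp (-b' * t^2))) :=
    abs_gauss_integrable hb'pos _
  have hint1 : Integrable (fun t : ℝ => max (|t|-1) 0 * (c * exp (-t^2/(2*σ^2)))) := by
    apply hint2.mono'
    · apply Continuous.aestronglyMeasurable
      exact ((continuous_abs.sub continuous_const).max continuous_const).mul
        (continuous_const.mul ((continuous_pow 2).neg.div_const _).rexp)
    · refine Filter.Eventually.of_forall (fun t => ?_)
      rw [Real.norm_eq_abs, abs_of_nonneg (by positivity)]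
      exact hpt t
  calc ∫ t : ℝ, max (|t|-1) 0 * (c * exp (-t^2/(2*σ^2)))
      ≤ ∫ t : ℝ, c * exp (-b') * (|t| * exp (-b' * t^2)) :=
        integral_mono hint1 hint2 hpt
    _ = c * exp (-b') * b'⁻¹ := by
        rw [integral_const_mul, integral_abs_mul hb'pos]
    _ ≤ 4 * exp (-0.2/σ^2) := by
        have h2pos : (0:ℝ) < 2*π*σ^2 := by positivity
        have hcle : c ≤ (2*σ)⁻¹ := by
          rw [hc, show (-(1:ℝ)/2) = -(1/2) by norm_num, Real.rpow_neg h2pos.le,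
            ← Real.sqrt_eq_rpow]
          have hsq : 2*σ ≤ Real.sqrt (2*π*σ^2) := by
            rw [show (2*σ) = Real.sqrt ((2*σ)^2) from (Real.sqrt_sq (by positivity)).symm]
            apply Real.sqrt_le_sqrt
            nlinarith [Real.pi_gt_three]
          exact inv_anti₀ (by positivity) hsq
        have hb'inv : b'⁻¹ = 4*σ^2 := by rw [hb', inv_inv]
        have hexple : exp (-b') ≤ exp (-0.2/σ^2) := by
          apply Real.exp_le_exp.mpr
          rw [hb']
          rw [show ((4:ℝ)*σ^2)⁻¹ = 0.25/σ^2 by rw [div_eq_mul_inv]; norm_num; ring,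
            show (-0.2:ℝ)/σ^2 = -(0.2/σ^2) by ring, neg_le_neg_iff]
          gcongr
          norm_num
        have key1 : c * exp (-b') * b'⁻¹ ≤ (2*σ)⁻¹ * exp (-b') * (4*σ^2) := by
          rw [hb'inv]
          exact mul_le_mul_of_nonneg_right
            (mul_le_mul_of_nonneg_right hcle (exp_pos _).le) (by positivity)
        have key2 : (2*σ)⁻¹ * exp (-b') * (4*σ^2) = 2*σ*exp (-b') := by
          field_simp; ring
        have key3 : 2*σ*exp (-b') ≤ 2*exp (-0.2/σ^2) := by
          nlinarith [exp_pos (-b'), Real.exp_le_exp.mpr (le_refl (-b')), hexple,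
            mul_le_mul_of_nonneg_left hexple (by linarith : (0:ℝ) ≤ 2*σ)]
        nlinarith [exp_pos (-0.2/σ^2)]


lemma g0_integrable {σ : ℝ} (hσ0 : 0 < σ) :
    Integrable (fun t : ℝ => max (|t|-1) 0 * ((2*π*σ^2) ^ (-(1:ℝ)/2) * exp (-t^2/(2*σ^2)))) := by
  have h := abs_gauss_integrable (b := (2*σ^2)⁻¹) (by positivity) ((2*π*σ^2) ^ (-(1:ℝ)/2))
  apply h.mono'
  · exact (((continuous_abs.sub continuous_const).max continuous_const).mul
      (continuous_const.mul ((continuous_pow 2).neg.div_const _).rexp)).aestronglyMeasurable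
  · refine Filter.Eventually.of_forall (fun t => ?_)
    rw [Real.norm_eq_abs, abs_of_nonneg (by positivity)]
    rw [(exp_form hσ0 t).symm]
    calc max (|t|-1) 0 * ((2*π*σ^2) ^ (-(1:ℝ)/2) * exp (-t^2/(2*σ^2)))
        ≤ |t| * ((2*π*σ^2) ^ (-(1:ℝ)/2) * exp (-t^2/(2*σ^2))) := by
          apply mul_le_mul_of_nonneg_right
            (max_le (by linarith [abs_nonneg t]) (abs_nonneg t)) (by positivity)
      _ = (2*π*σ^2) ^ (-(1:ℝ)/2) * (|t| * exp (-t^2/(2*σ^2))) := by ring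


lemma clip_inner_abs {d : ℕ} (z u : EuclideanSpace ℝ (Fin d)) :
    |⟪z, clip z 3 u⟫ - ⟪z, u⟫| = max (|⟪z, u⟫| - 3) 0 := by
  unfold clip
  by_cases ht : ⟪z, u⟫ = 0
  · simp [ht]
  · rw [if_pos ht, real_inner_smul_right]
    have habs : 0 < |⟪z, u⟫| := abs_pos.mpr ht
    set t := ⟪z, u⟫ with htdef
    by_cases h3 : |t| ≤ 3
    · have h1 : (1:ℝ) ≤ 3 / |t| := (one_le_div habs).mpr h3
      rw [min_eq_left h1, one_mul, sub_self, abs_zero,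
        max_eq_right (by linarith : |t| - 3 ≤ 0)]
    · push_neg at h3
      have h1 : (3:ℝ) / |t| ≤ 1 := (div_le_one habs).mpr h3.le
      rw [min_eq_right h1, max_eq_left (by linarith : (0:ℝ) ≤ |t| - 3)]
      have e1 : 3 / |t| * t - t = -((1 - 3/|t|) * t) := by ring
      rw [e1, abs_neg, abs_mul, abs_of_nonneg (by linarith : (0:ℝ) ≤ 1 - 3/|t|)]
      field_simp

lemma clip_norm_le {d : ℕ} (z u : EuclideanSpace ℝ (Fin d)) : ‖clip z 3 u‖ ≤ ‖u‖ := by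
  unfold clip
  split_ifs with ht
  · rw [norm_smul]
    have habs : 0 < |⟪z, u⟫| := abs_pos.mpr ht
    have h1 : 0 < min 1 (3 / |⟪z, u⟫|) := lt_min one_pos (by positivity)
    calc ‖min 1 (3 / |⟪z, u⟫|)‖ * ‖u‖ ≤ 1 * ‖u‖ := by
          apply mul_le_mul_of_nonneg_right _ (norm_nonneg u)
          rw [Real.norm_eq_abs, abs_of_pos h1]
          exact min_le_left _ _
      _ = ‖u‖ := one_mul _
  · exact le_refl _

lemma clip_measurable {d : ℕ} (z : EuclideanSpace ℝ (Fin d)) :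
    Measurable (fun u => clip z 3 u) := by
  unfold clip
  have hms : MeasurableSet {u : EuclideanSpace ℝ (Fin d) | ⟪z, u⟫ ≠ 0} := by
    have : Continuous fun u : EuclideanSpace ℝ (Fin d) => ⟪z, u⟫ := continuous_const.inner continuous_id
    exact (this.measurable (measurableSet_singleton 0)).compl
  refine Measurable.ite hms ?_ measurable_id
  refine Measurable.smul (f := fun u => min 1 (3 / |⟪z, u⟫|)) (g := id) ?_ measurable_id
  have hc : Continuous fun u : EuclideanSpace ℝ (Fin d) => ⟪z, u⟫ := continuous_const.inner continuous_id
  exact (measurable_const.min ((measurable_const.div (hc.measurable.abs))))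

lemma stepC {d : ℕ} [NeZero d] {μZ : EuclideanSpace ℝ (Fin d)} {σ : ℝ}
    (hσ0 : 0 < σ) (hσ1 : σ ≤ 1) (hμ : ‖μZ‖ ≤ 2)
    {u : EuclideanSpace ℝ (Fin d)} (hu : ‖u‖ ≤ 1) :
    ∫⁻ z, ENNReal.ofReal (max (|⟪z, u⟫| - 3) 0) ∂(gaussianPi μZ σ)
      ≤ ENNReal.ofReal (4 * exp (-0.2/σ^2)) := by
  classical
  set c : ℝ := (2*π*σ^2) ^ (-(1:ℝ)/2) with hcdef
  set C : ℝ := (2*π*σ^2) ^ (-(d:ℝ)/2) with hCdef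
  have h2pos : (0:ℝ) < 2*π*σ^2 := by positivity
  have hcpos : 0 < c := by rw [hcdef]; positivity
  have hCpos : 0 < C := by rw [hCdef]; positivity
  have hcC : c ^ (d:ℕ) = C := by
    rw [hcdef, hCdef, ← Real.rpow_natCast ((2*π*σ^2) ^ (-(1:ℝ)/2)) d, ← Real.rpow_mul h2pos.le]
    norm_num
    congr 1
    ring
  -- continuity of density
  have hdenscont : Continuous fun z : EuclideanSpace ℝ (Fin d) =>
      C * exp (-‖z - μZ‖^2 / (2*σ^2)) :=
    continuous_const.mul ((((continuous_id.sub continuous_const).norm.pow 2).neg.div_const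
      _).rexp)
  have hρmeas : Measurable fun z : EuclideanSpace ℝ (Fin d) =>
      ENNReal.ofReal (C * exp (-‖z - μZ‖^2 / (2*σ^2))) :=
    hdenscont.measurable.ennreal_ofReal
  have hinnercont : Continuous fun z : EuclideanSpace ℝ (Fin d) => ⟪z, u⟫ :=
    continuous_id.inner continuous_const
  have hqmeas : Measurable fun z : EuclideanSpace ℝ (Fin d) =>
      ENNReal.ofReal (max (|⟪z, u⟫| - 3) 0) :=
    (((hinnercont.abs.sub continuous_const).max continuous_const)).measurable.ennreal_ofReal
  rw [gaussianPi, lintegral_withDensity_eq_lintegral_mul volume hρmeas hqmeas]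
  by_cases hu0 : u = 0
  · simp only [hu0, inner_zero_right, abs_zero, Pi.mul_apply]
    norm_num
  -- rotation setup
  have hr : 0 < ‖u‖ := norm_pos_iff.mpr hu0
  set u' : EuclideanSpace ℝ (Fin d) := ‖u‖⁻¹ • u with hu'def
  have hu'norm : ‖u'‖ = 1 := norm_smul_inv_norm hu0
  set v₀ : EuclideanSpace ℝ (Fin d) := EuclideanSpace.single (0 : Fin d) (1:ℝ) with hv₀def
  have hv₀norm : ‖v₀‖ = 1 := by rw [hv₀def, EuclideanSpace.norm_single, norm_one]
  set R := Submodule.reflection (ℝ ∙ (u' - v₀))ᗮ with hRdef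
  have hRu' : R u' = v₀ := Submodule.reflection_sub (by rw [hu'norm, hv₀norm])
  have hRv₀ : R v₀ = u' := by rw [← hRu', hRdef, Submodule.reflection_reflection]
  have hinnerR : ∀ w : EuclideanSpace ℝ (Fin d), ⟪(R w : EuclideanSpace ℝ (Fin d)), u⟫
      = ‖u‖ * (w 0) := by
    intro w
    have hu_eq : u = ‖u‖ • u' := by rw [hu'def, smul_inv_smul₀ hr.ne']
    calc ⟪(R w : EuclideanSpace ℝ (Fin d)), u⟫ = ⟪(R w : EuclideanSpace ℝ (Fin d)), ‖u‖ • u'⟫ := by rw [← hu_eq]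
      _ = ‖u‖ * ⟪(R w : EuclideanSpace ℝ (Fin d)), u'⟫ := real_inner_smul_right _ _ _
      _ = ‖u‖ * ⟪(R w : EuclideanSpace ℝ (Fin d)), R v₀⟫ := by rw [hRv₀]
      _ = ‖u‖ * ⟪w, v₀⟫ := by rw [LinearIsometryEquiv.inner_map_map]
      _ = ‖u‖ * (w 0) := by rw [hv₀def, EuclideanSpace.inner_single_right]; simp
  have hm : |⟪μZ, u⟫| ≤ 2 := by
    calc |⟪μZ, u⟫| ≤ ‖μZ‖ * ‖u‖ := abs_real_inner_le_norm μZ u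
      _ ≤ 2 * 1 := mul_le_mul hμ hu (norm_nonneg u) (by norm_num)
      _ = 2 := by norm_num
  set m : ℝ := ⟪μZ, u⟫ with hmdef
  set f : EuclideanSpace ℝ (Fin d) → ENNReal := fun z =>
    ENNReal.ofReal (C * exp (-‖z - μZ‖^2 / (2*σ^2)))
      * ENNReal.ofReal (max (|⟪z, u⟫| - 3) 0) with hfdef
  set g : EuclideanSpace ℝ (Fin d) → ENNReal := fun w =>
    ENNReal.ofReal (C * exp (-‖w‖^2 / (2*σ^2)))
      * ENNReal.ofReal (max (|⟪w, u⟫ + m| - 3) 0) with hgdef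
  have hgmeas : Measurable g := by
    refine Measurable.mul (f := fun w => ENNReal.ofReal (C * exp (-‖w‖^2 / (2*σ^2))))
      (g := fun w => ENNReal.ofReal (max (|⟪w, u⟫ + m| - 3) 0)) ?_ ?_
    · exact (continuous_const.mul
        ((continuous_norm.pow 2).neg.div_const _).rexp).measurable.ennreal_ofReal
    · exact (((hinnercont.add continuous_const).abs.sub
        continuous_const).max continuous_const).measurable.ennreal_ofReal
  have step1 : ∫⁻ z, f z ∂volume = ∫⁻ w, g w ∂volume := by
    rw [← lintegral_add_right_eq_self f μZ]
    apply lintegral_congr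
    intro w
    rw [hfdef, hgdef]
    simp only [add_sub_cancel_right, inner_add_left]
    rfl
  have step2 : ∫⁻ w, g w ∂volume = ∫⁻ w, g (R w) ∂volume :=
    (R.measurePreserving.lintegral_comp hgmeas).symm
  have step3 : ∀ w : EuclideanSpace ℝ (Fin d), g (R w)
      ≤ ENNReal.ofReal (C * exp (-‖w‖^2 / (2*σ^2)))
        * ENNReal.ofReal (max (|w 0| - 1) 0) := by
    intro w
    rw [hgdef]
    simp only [R.norm_map, hinnerR]
    apply mul_le_mul_of_nonneg_left _ (zero_le) |>.trans_eq rfl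
    apply ENNReal.ofReal_le_ofReal
    apply max_le_max _ le_rfl
    have h1 : |‖u‖ * w 0 + m| ≤ |w 0| + 2 := by
      calc |‖u‖ * w 0 + m| ≤ |‖u‖ * w 0| + |m| := abs_add_le _ _
        _ ≤ |w 0| + 2 := by
            rw [abs_mul, abs_of_nonneg (norm_nonneg u)]
            have : ‖u‖ * |w 0| ≤ 1 * |w 0| :=
              mul_le_mul_of_nonneg_right hu (abs_nonneg _)
            rw [hmdef] at hm ⊢
            linarith
    linarith
  -- product structure
  set G : (Fin d → ℝ) → ENNReal := fun x => ENNReal.ofReal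
    (∏ i, (if i = 0 then max (|x i| - 1) 0 else 1) * (c * exp (-(x i)^2/(2*σ^2)))) with hGdef
  have hprodid : ∀ w : EuclideanSpace ℝ (Fin d),
      ENNReal.ofReal (C * exp (-‖w‖^2 / (2*σ^2))) * ENNReal.ofReal (max (|w 0| - 1) 0)
        = G (fun i => w i) := by
    intro w
    rw [hGdef]
    have hnn : (0:ℝ) ≤ C * exp (-‖w‖^2 / (2*σ^2)) := by positivity
    rw [← ENNReal.ofReal_mul hnn]
    congr 1
    rw [Finset.prod_mul_distrib]
    have h1 : (∏ i : Fin d, if i = 0 then max (|w i| - 1) 0 else 1) = max (|w 0| - 1) 0 := by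
      rw [Finset.prod_ite_eq' Finset.univ (0 : Fin d) (fun i => max (|w i| - 1) 0)]
      simp
    have h2 : (∏ i : Fin d, c * exp (-(w i)^2/(2*σ^2))) = C * exp (-‖w‖^2 / (2*σ^2)) := by
      rw [Finset.prod_mul_distrib, Finset.prod_const, ← Real.exp_sum, Finset.card_univ,
        Fintype.card_fin, hcC]
      congr 1
      have hnorm : ‖w‖^2 = ∑ i, (w i)^2 := by
        rw [EuclideanSpace.norm_eq, Real.sq_sqrt (by positivity)]
        simp [Real.norm_eq_abs, sq_abs]
      rw [hnorm, ← Finset.sum_div, ← Finset.sum_neg_distrib]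
    rw [h1, h2]
    ring
  have hGmeas : Measurable G := by
    apply Measurable.ennreal_ofReal
    apply Finset.measurable_prod
    intro i _
    apply Measurable.mul
    · exact Measurable.ite (by simp) ((((measurable_pi_apply i).abs.sub measurable_const).max
        measurable_const)) measurable_const
    · exact (continuous_const.mul
        (((continuous_pow 2).comp (continuous_apply i)).neg.div_const _).rexp).measurable
  have step4 : ∫⁻ w : EuclideanSpace ℝ (Fin d),
      ENNReal.ofReal (C * exp (-‖w‖^2 / (2*σ^2))) * ENNReal.ofReal (max (|w 0| - 1) 0) ∂volume
      = ∫⁻ x : Fin d → ℝ, G x ∂volume := by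
    rw [← (EuclideanSpace.volume_preserving_symm_measurableEquiv_toLp (Fin d)).lintegral_comp hGmeas]
    apply lintegral_congr
    intro w
    exact hprodid w
  -- evaluate the product integral
  have hintegrand : ∀ i : Fin d, Integrable (fun t : ℝ =>
      (if i = 0 then max (|t| - 1) 0 else 1) * (c * exp (-t^2/(2*σ^2)))) := by
    intro i
    rcases eq_or_ne i 0 with h | h
    · simp only [h, if_pos rfl]
      exact g0_integrable hσ0
    · simp only [if_neg h, one_mul]
      exact gauss_integrable hσ0 c
  have step5 : ∫⁻ x : Fin d → ℝ, G x ∂volume = ENNReal.ofReal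
      (∏ i : Fin d, ∫ t : ℝ, (if i = 0 then max (|t| - 1) 0 else 1) * (c * exp (-t^2/(2*σ^2)))) := by
    rw [hGdef, ← MeasureTheory.integral_fintype_prod_eq_prod (𝕜 := ℝ) (ι := Fin d)
      (fun i t => (if i = 0 then max (|t| - 1) 0 else 1) * (c * exp (-t^2/(2*σ^2))))]
    rw [← volume_pi]
    rw [← ofReal_integral_eq_lintegral_ofReal]
    · exact Integrable.fintype_prod hintegrand
    · refine Filter.Eventually.of_forall (fun x => ?_)
      apply Finset.prod_nonneg
      intro i _
      have : (0:ℝ) ≤ c * exp (-(x i)^2/(2*σ^2)) := by positivity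
      positivity
  have step6 : (∏ i : Fin d, ∫ t : ℝ,
      (if i = 0 then max (|t| - 1) 0 else 1) * (c * exp (-t^2/(2*σ^2))))
      = ∫ t : ℝ, max (|t| - 1) 0 * (c * exp (-t^2/(2*σ^2))) := by
    rw [Finset.prod_eq_single (0 : Fin d)]
    · simp
    · intro i _ h
      simp only [if_neg h, one_mul]
      exact gauss_norm1 hσ0
    · simp
  calc ∫⁻ z, (fun z => ENNReal.ofReal (C * exp (-‖z - μZ‖^2 / (2*σ^2)))) z
        * (fun z => ENNReal.ofReal (max (|⟪z, u⟫| - 3) 0)) z ∂volume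
      = ∫⁻ w, g (R w) ∂volume := by rw [← step2, ← step1]
    _ ≤ ∫⁻ w : EuclideanSpace ℝ (Fin d), ENNReal.ofReal (C * exp (-‖w‖^2 / (2*σ^2)))
        * ENNReal.ofReal (max (|w 0| - 1) 0) ∂volume := lintegral_mono step3
    _ = ENNReal.ofReal (∫ t : ℝ, max (|t| - 1) 0 * (c * exp (-t^2/(2*σ^2)))) := by
        rw [step4, step5, step6]
    _ ≤ ENNReal.ofReal (4 * exp (-0.2/σ^2)) :=
        ENNReal.ofReal_le_ofReal (oneD_bound hσ0 hσ1)

theorem clip_concentration {d : ℕ} (P : Measure (EuclideanSpace ℝ (Fin d)))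
    [IsProbabilityMeasure P] (hP : ∀ᵐ u ∂P, ‖u‖ ≤ 1)
    (μZ : EuclideanSpace ℝ (Fin d)) (σZ : ℝ)
    (hσ0 : 0 < σZ) (hσ1 : σZ ≤ 1) (hμ : ‖μZ‖ ≤ 2) :
    gaussianPi μZ σZ
        {z | 2 * Real.exp (-0.1 / σZ ^ 2) <
          |⟪z, (∫ u, clip z 3 u ∂P) - ∫ u, u ∂P⟫|} ≤
      ENNReal.ofReal (2 * Real.exp (-0.1 / σZ ^ 2)) := by
  classical
  have ht₀pos : (0:ℝ) < 2 * Real.exp (-0.1 / σZ ^ 2) := by positivity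
  rcases Nat.eq_zero_or_pos d with hd | hd
  · subst hd
    have hempty : {z : EuclideanSpace ℝ (Fin 0) | 2 * Real.exp (-0.1 / σZ ^ 2) <
        |⟪z, (∫ u, clip z 3 u ∂P) - ∫ u, u ∂P⟫|} = ∅ := by
      ext z
      simp only [Set.mem_setOf_eq, Set.mem_empty_iff_false, iff_false, not_lt]
      have hz : z = 0 := Subsingleton.elim z 0
      rw [hz, inner_zero_left, abs_zero]
      positivity
    rw [hempty, measure_empty]
    exact zero_le
  haveI : NeZero d := ⟨hd.ne'⟩
  set t₀ : ℝ := 2 * Real.exp (-0.1 / σZ ^ 2) with ht₀def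
  set H : EuclideanSpace ℝ (Fin d) → ENNReal :=
    fun z => ∫⁻ u, ENNReal.ofReal (max (|⟪z, u⟫| - 3) 0) ∂P with hHdef
  have hpaircont : Continuous fun p : EuclideanSpace ℝ (Fin d) × EuclideanSpace ℝ (Fin d) =>
      ENNReal.ofReal (max (|⟪p.1, p.2⟫| - 3) 0) := by
    apply ENNReal.continuous_ofReal.comp
    exact ((continuous_inner.abs.sub continuous_const).max continuous_const)
  have hHmeas : Measurable H := by
    rw [hHdef]
    exact Measurable.lintegral_prod_right hpaircont.measurable
  -- Step A
  have stepA : ∀ z : EuclideanSpace ℝ (Fin d),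
      ENNReal.ofReal |⟪z, (∫ u, clip z 3 u ∂P) - ∫ u, u ∂P⟫| ≤ H z := by
    intro z
    have hclip_int : Integrable (fun u => clip z 3 u) P := by
      refine Integrable.mono' (integrable_const 1) (clip_measurable z).aestronglyMeasurable ?_
      filter_upwards [hP] with u hu
      exact (clip_norm_le z u).trans hu
    have hid_int : Integrable (fun u : EuclideanSpace ℝ (Fin d) => u) P := by
      refine Integrable.mono' (integrable_const 1) aestronglyMeasurable_id ?_
      exact hP
    have hinner : ⟪z, (∫ u, clip z 3 u ∂P) - ∫ u, u ∂P⟫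
        = ∫ u, (⟪z, clip z 3 u⟫ - ⟪z, u⟫) ∂P := by
      rw [inner_sub_right, ← integral_inner hclip_int z, ← integral_inner hid_int z,
        ← integral_sub (hclip_int.const_inner z) (hid_int.const_inner z)]
    rw [hinner]
    calc ENNReal.ofReal |∫ u, (⟪z, clip z 3 u⟫ - ⟪z, u⟫) ∂P|
        ≤ ∫⁻ u, ENNReal.ofReal ‖⟪z, clip z 3 u⟫ - ⟪z, u⟫‖ ∂P := by
          rw [← Real.norm_eq_abs]
          exact (ENNReal.ofReal_le_ofReal (norm_integral_le_lintegral_norm _)).trans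
            ENNReal.ofReal_toReal_le
      _ = H z := by
          apply lintegral_congr
          intro u
          rw [Real.norm_eq_abs, clip_inner_abs]
  -- the measure is bounded by Markov on H
  have hsub : {z | t₀ < |⟪z, (∫ u, clip z 3 u ∂P) - ∫ u, u ∂P⟫|}
      ⊆ {z | ENNReal.ofReal t₀ ≤ H z} := by
    intro z hz
    exact le_trans (ENNReal.ofReal_le_ofReal (le_of_lt hz)) (stepA z)
  have markov := meas_ge_le_lintegral_div (μ := gaussianPi μZ σZ) hHmeas.aemeasurable
    (ε := ENNReal.ofReal t₀) (by simp [ENNReal.ofReal_pos.mpr ht₀pos, ne_of_gt])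
    ENNReal.ofReal_ne_top
  -- bound the integral of H
  have hρmeas : Measurable fun z : EuclideanSpace ℝ (Fin d) =>
      ENNReal.ofReal ((2 * π * σZ ^ 2) ^ (-(d : ℝ) / 2) * Real.exp (-‖z - μZ‖ ^ 2 / (2 * σZ ^ 2))) := by
    apply Measurable.ennreal_ofReal
    exact (continuous_const.mul
      (((continuous_id.sub continuous_const).norm.pow 2).neg.div_const _).rexp).measurable
  have hHint : ∫⁻ z, H z ∂(gaussianPi μZ σZ) ≤ ENNReal.ofReal (4 * exp (-0.2/σZ^2)) := by
    rw [gaussianPi, lintegral_withDensity_eq_lintegral_mul volume hρmeas hHmeas]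
    have swap1 : ∫⁻ z, ((fun z => ENNReal.ofReal ((2 * π * σZ ^ 2) ^ (-(d : ℝ) / 2)
          * Real.exp (-‖z - μZ‖ ^ 2 / (2 * σZ ^ 2)))) * H) z ∂volume
        = ∫⁻ u, ∫⁻ z, ENNReal.ofReal ((2 * π * σZ ^ 2) ^ (-(d : ℝ) / 2)
          * Real.exp (-‖z - μZ‖ ^ 2 / (2 * σZ ^ 2)))
          * ENNReal.ofReal (max (|⟪z, u⟫| - 3) 0) ∂volume ∂P := by
      rw [← lintegral_lintegral_swap]
      · apply lintegral_congr
        intro z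
        simp only [Pi.mul_apply, hHdef]
        have hmu : Measurable fun u : EuclideanSpace ℝ (Fin d) =>
            ENNReal.ofReal (max (|⟪z, u⟫| - 3) 0) :=
          (((continuous_const.inner continuous_id).abs.sub
            continuous_const).max continuous_const).measurable.ennreal_ofReal
        exact (lintegral_const_mul _ hmu).symm
      · refine AEMeasurable.mul (f := fun p : EuclideanSpace ℝ (Fin d) × EuclideanSpace ℝ (Fin d) =>
            ENNReal.ofReal ((2 * π * σZ ^ 2) ^ (-(d : ℝ) / 2) * Real.exp (-‖p.1 - μZ‖ ^ 2 / (2 * σZ ^ 2))))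
          (g := fun p : EuclideanSpace ℝ (Fin d) × EuclideanSpace ℝ (Fin d) =>
            ENNReal.ofReal (max (|⟪p.1, p.2⟫| - 3) 0)) ?_ ?_
        · exact (hρmeas.comp measurable_fst).aemeasurable
        · exact hpaircont.measurable.aemeasurable
    rw [swap1]
    have hfold : ∀ u : EuclideanSpace ℝ (Fin d), ‖u‖ ≤ 1 →
        (∫⁻ z, ENNReal.ofReal ((2 * π * σZ ^ 2) ^ (-(d : ℝ) / 2)
          * Real.exp (-‖z - μZ‖ ^ 2 / (2 * σZ ^ 2)))
          * ENNReal.ofReal (max (|⟪z, u⟫| - 3) 0) ∂volume)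
          ≤ ENNReal.ofReal (4 * exp (-0.2/σZ^2)) := by
      intro u hu
      have hmz : Measurable fun z : EuclideanSpace ℝ (Fin d) =>
          ENNReal.ofReal (max (|⟪z, u⟫| - 3) 0) :=
        (((continuous_id.inner continuous_const).abs.sub
          continuous_const).max continuous_const).measurable.ennreal_ofReal
      have := stepC (μZ := μZ) hσ0 hσ1 hμ hu
      rw [gaussianPi, lintegral_withDensity_eq_lintegral_mul volume hρmeas hmz] at this
      exact this
    calc ∫⁻ u, ∫⁻ z, ENNReal.ofReal ((2 * π * σZ ^ 2) ^ (-(d : ℝ) / 2)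
          * Real.exp (-‖z - μZ‖ ^ 2 / (2 * σZ ^ 2)))
          * ENNReal.ofReal (max (|⟪z, u⟫| - 3) 0) ∂volume ∂P
        ≤ ∫⁻ _, ENNReal.ofReal (4 * exp (-0.2/σZ^2)) ∂P := by
          apply lintegral_mono_ae
          filter_upwards [hP] with u hu
          exact hfold u hu
      _ = ENNReal.ofReal (4 * exp (-0.2/σZ^2)) := by
          rw [lintegral_const, measure_univ, mul_one]
  -- conclude
  have hkey : ENNReal.ofReal (4 * exp (-0.2/σZ^2))
      = ENNReal.ofReal t₀ * ENNReal.ofReal t₀ := by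
    rw [← ENNReal.ofReal_mul (le_of_lt ht₀pos), ht₀def]
    congr 1
    have h : rexp (-0.1/σZ^2) * rexp (-0.1/σZ^2) = rexp (-0.2/σZ^2) := by
      rw [← Real.exp_add]; congr 1; ring
    calc 4 * rexp (-0.2/σZ^2) = 4 * (rexp (-0.1/σZ^2) * rexp (-0.1/σZ^2)) := by rw [h]
      _ = 2 * rexp (-0.1/σZ^2) * (2 * rexp (-0.1/σZ^2)) := by ring
  calc gaussianPi μZ σZ {z | t₀ < |⟪z, (∫ u, clip z 3 u ∂P) - ∫ u, u ∂P⟫|}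
      ≤ gaussianPi μZ σZ {z | ENNReal.ofReal t₀ ≤ H z} := measure_mono hsub
    _ ≤ (∫⁻ z, H z ∂(gaussianPi μZ σZ)) / ENNReal.ofReal t₀ := markov
    _ ≤ ENNReal.ofReal (4 * exp (-0.2/σZ^2)) / ENNReal.ofReal t₀ :=
        ENNReal.div_le_div_right hHint _
    _ = ENNReal.ofReal t₀ * ENNReal.ofReal t₀ / ENNReal.ofReal t₀ := by rw [hkey]
    _ = ENNReal.ofReal t₀ := by
        rw [mul_div_assoc, ENNReal.div_self (by simp [ne_of_gt, ENNReal.ofReal_pos.mpr ht₀pos])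
          ENNReal.ofReal_ne_top, mul_one]
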